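/- arXiv:2002.04452 — 4 statements merged into one kernel-verified Lean document; each statement's English description precedes it below -/
import Mathlib

section
/- Let α, γ, δ be real parameters and work on the open set U = { (x, y, p, q, κ) ∈ ℝ⁵ : y > 0 }. Let g : U → (symmetric 5×5 real matrices) be given by g₁₁ = g₂₂ = α/y², g₃₃ = γ(x²+y²)/y + δq², g₄₄ = γ/y + δp², g₅₅ = δ, g₃₄ = g₄₃ = γx/y − δpq, g₃₅ = g₅₃ = δq, g₄₅ = g₅₄ = −δp, and all other entries 0 (this is the metric ds² = (α/y²)(dx²+dy²) + [γ(x²+y²)/y + δq²]dp² + [γ/y + δp²]dq² + δ dκ² + 2(γx/y − δpq)dp dq + 2δq dp dκ − 2δp dq dκ on the extended Siegel–Jacobi upper half-plane). Then each of the six vector fields F* = (1, 0, 0, −p, 0), G* = (y²−x², −2xy, −q, 0, 0), H* = (2x, 2y, −p, q, 0), P* = (0, 0, 1, 0, q), Q* = (0, 0, 0, 1, −p), R* = (0, 0, 0, 0, 1) is a Killing vector field for g; i.e., for every X among these six, every point of U and all indices λ, χ ∈ {1,…,5}: Σ_μ [ X^μ ∂_μ g_{λχ} + g_{μχ} ∂_λ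 X^μ + g_{λμ} ∂_χ X^μ ] = 0. -/
open Matrix

namespace Stmt14

/-- The partial derivative `∂_i f` of a function on `ℝ⁵` in coordinates. -/
noncomputable def pd (i : Fin 5) (f : (Fin 5 → ℝ) → ℝ) (x : Fin 5 → ℝ) : ℝ :=
  fderiv ℝ f x (Pi.single i 1)

/-- The three-parameter invariant metric on the extended Siegel–Jacobi upper half-plane
in the coordinates `(x, y, p, q, κ)`. -/
noncomputable def metric (α γ δ : ℝ) (v : Fin 5 → ℝ) : Matrix (Fin 5) (Fin 5) ℝ :=
  !![α / (v 1) ^ 2, 0, 0, 0, 0;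
     0, α / (v 1) ^ 2, 0, 0, 0;
     0, 0, γ * ((v 0) ^ 2 + (v 1) ^ 2) / (v 1) + δ * (v 3) ^ 2,
       γ * (v 0) / (v 1) - δ * (v 2) * (v 3), δ * (v 3);
     0, 0, γ * (v 0) / (v 1) - δ * (v 2) * (v 3), γ / (v 1) + δ * (v 2) ^ 2, -(δ * (v 2));
     0, 0, δ * (v 3), -(δ * (v 2)), δ]

/-- `X` satisfies the Killing equations for the metric `g` at `v`. -/
def IsKillingAt (g : (Fin 5 → ℝ) → Matrix (Fin 5) (Fin 5) ℝ)
    (X : (Fin 5 → ℝ) → Fin 5 → ℝ) (v : Fin 5 → ℝ) : Prop :=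
  ∀ lam chi : Fin 5,
    (∑ mu : Fin 5, (X v mu * pd mu (fun u => g u lam chi) v
      + g v mu chi * pd lam (fun u => X u mu) v
      + g v lam mu * pd chi (fun u => X u mu) v)) = 0

lemma diffAt_div {a b : (Fin 5 → ℝ) → ℝ} {v : Fin 5 → ℝ}
    (ha : DifferentiableAt ℝ a v) (hb : DifferentiableAt ℝ b v) (h0 : b v ≠ 0) :
    DifferentiableAt ℝ (fun u => a u / b u) v := by
  simp only [div_eq_mul_inv]; exact ha.mul (hb.inv h0)

variable {v : Fin 5 → ℝ} {i : Fin 5}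
lemma pd_coord (j : Fin 5) : pd i (fun u => u j) v = if j = i then 1 else 0 := by
  rw [pd, (hasFDerivAt_apply j v).fderiv]; simp [Pi.single_apply]
lemma pd_const (c : ℝ) : pd i (fun _ => c) v = 0 := by simp [pd]
lemma pd_add {a b : (Fin 5 → ℝ) → ℝ} (ha : DifferentiableAt ℝ a v) (hb : DifferentiableAt ℝ b v) :
    pd i (fun u => a u + b u) v = pd i a v + pd i b v := by
  rw [pd, fderiv_fun_add ha hb]; rfl
lemma pd_sub {a b : (Fin 5 → ℝ) → ℝ} (ha : DifferentiableAt ℝ a v) (hb : DifferentiableAt ℝ b v) :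
    pd i (fun u => a u - b u) v = pd i a v - pd i b v := by
  rw [pd, fderiv_fun_sub ha hb]; rfl
lemma pd_neg {a : (Fin 5 → ℝ) → ℝ} :
    pd i (fun u => -(a u)) v = -pd i a v := by
  rw [pd, fderiv_fun_neg]; rfl
lemma pd_mul {a b : (Fin 5 → ℝ) → ℝ} (ha : DifferentiableAt ℝ a v) (hb : DifferentiableAt ℝ b v) :
    pd i (fun u => a u * b u) v = pd i a v * b v + a v * pd i b v := by
  rw [pd, fderiv_fun_mul ha hb]; simp [pd]; ring
lemma pd_inv {b : (Fin 5 → ℝ) → ℝ} (hb : DifferentiableAt ℝ b v) (h0 : b v ≠ 0) :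
    pd i (fun u => (b u)⁻¹) v = -(pd i b v) / (b v)^2 := by
  have h := (hasDerivAt_inv h0).comp_hasFDerivAt v hb.hasFDerivAt
  rw [Function.comp_def] at h; rw [pd, h.fderiv]; simp [pd]; ring
lemma pd_div {a b : (Fin 5 → ℝ) → ℝ} (ha : DifferentiableAt ℝ a v) (hb : DifferentiableAt ℝ b v)
    (h0 : b v ≠ 0) :
    pd i (fun u => a u / b u) v = (pd i a v * b v - a v * pd i b v) / (b v)^2 := by
  simp only [div_eq_mul_inv]
  rw [pd_mul (b := fun u => (b u)⁻¹) ha (hb.inv h0), pd_inv hb h0]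
  field_simp
  ring
lemma pd_pow {a : (Fin 5 → ℝ) → ℝ} (ha : DifferentiableAt ℝ a v) (n : ℕ) :
    pd i (fun u => a u ^ n) v = n * a v ^ (n-1) * pd i a v := by
  have h := (hasDerivAt_pow n (a v)).comp_hasFDerivAt v ha.hasFDerivAt
  rw [Function.comp_def] at h; rw [pd, h.fderiv]; simp [pd]

section entries
variable (α γ δ : ℝ) (v : Fin 5 → ℝ)

lemma pdA (h0 : v 1 ≠ 0) (i : Fin 5) : pd i (fun u => α / (u 1) ^ 2) v
    = -2*α/(v 1)^3 * (if (1:Fin 5) = i then 1 else 0) := by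
  simp (disch := first | exact h0 | exact pow_ne_zero 2 h0 | fun_prop | exact diffAt_div (by fun_prop) (by fun_prop) h0)
    only [pd_div, pd_pow, pd_coord, pd_const]
  split_ifs <;> field_simp <;> ring
lemma pdB (h0 : v 1 ≠ 0) (i : Fin 5) :
    pd i (fun u => γ * ((u 0) ^ 2 + (u 1) ^ 2) / (u 1) + δ * (u 3) ^ 2) v
      = 2*γ*(v 0)/(v 1) * (if (0:Fin 5) = i then 1 else 0)
        + γ*((v 1)^2 - (v 0)^2)/(v 1)^2 * (if (1:Fin 5) = i then 1 else 0)
        + 2*δ*(v 3) * (if (3:Fin 5) = i then 1 else 0) := by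
  simp (disch := first | exact h0 | exact pow_ne_zero 2 h0 | fun_prop | exact diffAt_div (by fun_prop) (by fun_prop) h0)
    only [pd_add, pd_div, pd_mul, pd_pow, pd_coord, pd_const]
  split_ifs <;> field_simp <;> ring
lemma pdC (h0 : v 1 ≠ 0) (i : Fin 5) :
    pd i (fun u => γ * (u 0) / (u 1) - δ * (u 2) * (u 3)) v
      = γ/(v 1) * (if (0:Fin 5) = i then 1 else 0)
        - γ*(v 0)/(v 1)^2 * (if (1:Fin 5) = i then 1 else 0)
        - δ*(v 3) * (if (2:Fin 5) = i then 1 else 0)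
        - δ*(v 2) * (if (3:Fin 5) = i then 1 else 0) := by
  simp (disch := first | exact h0 | exact pow_ne_zero 2 h0 | fun_prop | exact diffAt_div (by fun_prop) (by fun_prop) h0)
    only [pd_sub, pd_div, pd_mul, pd_coord, pd_const]
  split_ifs <;> field_simp <;> ring
lemma pdD (i : Fin 5) : pd i (fun u => δ * (u 3)) v
    = δ * (if (3:Fin 5) = i then 1 else 0) := by
  simp (disch := fun_prop) only [pd_mul, pd_coord, pd_const]
  split_ifs <;> ring
lemma pdE (h0 : v 1 ≠ 0) (i : Fin 5) :
    pd i (fun u => γ / (u 1) + δ * (u 2) ^ 2) v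
      = -γ/(v 1)^2 * (if (1:Fin 5) = i then 1 else 0)
        + 2*δ*(v 2) * (if (2:Fin 5) = i then 1 else 0) := by
  simp (disch := first | exact h0 | exact pow_ne_zero 2 h0 | fun_prop | exact diffAt_div (by fun_prop) (by fun_prop) h0)
    only [pd_add, pd_div, pd_mul, pd_pow, pd_coord, pd_const]
  split_ifs <;> field_simp <;> ring
lemma pdF (i : Fin 5) : pd i (fun u => -(δ * (u 2))) v
    = -(δ * (if (2:Fin 5) = i then 1 else 0)) := by
  simp (disch := fun_prop) only [pd_neg, pd_mul, pd_coord, pd_const]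
  split_ifs <;> ring
lemma pdX1 (i : Fin 5) : pd i (fun u => -(u 2)) v
    = -(if (2:Fin 5) = i then 1 else 0) := by
  simp only [pd_neg, pd_coord]
lemma pdX2 (i : Fin 5) : pd i (fun u => (u 1) ^ 2 - (u 0) ^ 2) v
    = 2*(v 1)*(if (1:Fin 5) = i then 1 else 0) - 2*(v 0)*(if (0:Fin 5) = i then 1 else 0) := by
  simp (disch := fun_prop) only [pd_sub, pd_pow, pd_coord]
  split_ifs <;> norm_num
lemma pdX3 (i : Fin 5) : pd i (fun u => -(2 * u 0 * u 1)) v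
    = -(2*(v 1)*(if (0:Fin 5) = i then 1 else 0) + 2*(v 0)*(if (1:Fin 5) = i then 1 else 0)) := by
  simp (disch := fun_prop) only [pd_neg, pd_mul, pd_coord, pd_const]
  split_ifs <;> ring
lemma pdX4 (i : Fin 5) : pd i (fun u => -(u 3)) v
    = -(if (3:Fin 5) = i then 1 else 0) := by
  simp only [pd_neg, pd_coord]
lemma pdX5 (i : Fin 5) : pd i (fun u => 2 * u 0) v
    = 2*(if (0:Fin 5) = i then 1 else 0) := by
  simp (disch := fun_prop) only [pd_mul, pd_coord, pd_const]; split_ifs <;> ring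
lemma pdX6 (i : Fin 5) : pd i (fun u => 2 * u 1) v
    = 2*(if (1:Fin 5) = i then 1 else 0) := by
  simp (disch := fun_prop) only [pd_mul, pd_coord, pd_const]; split_ifs <;> ring
end entries


set_option maxHeartbeats 1000000 in
theorem fundamental_vector_fields_are_Killing (α γ δ : ℝ) (v : Fin 5 → ℝ) (hy : 0 < v 1) :
    -- F* = ∂_x − p ∂_q
    IsKillingAt (metric α γ δ) (fun u => ![1, 0, 0, -(u 2), 0]) v ∧
    -- G* = (y² − x²) ∂_x − 2xy ∂_y − q ∂_p
    IsKillingAt (metric α γ δ)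
      (fun u => ![(u 1) ^ 2 - (u 0) ^ 2, -(2 * u 0 * u 1), -(u 3), 0, 0]) v ∧
    -- H* = 2x ∂_x + 2y ∂_y − p ∂_p + q ∂_q
    IsKillingAt (metric α γ δ) (fun u => ![2 * u 0, 2 * u 1, -(u 2), u 3, 0]) v ∧
    -- P* = ∂_p + q ∂_κ
    IsKillingAt (metric α γ δ) (fun u => ![0, 0, 1, 0, u 3]) v ∧
    -- Q* = ∂_q − p ∂_κ
    IsKillingAt (metric α γ δ) (fun u => ![0, 0, 0, 1, -(u 2)]) v ∧
    -- R* = ∂_κ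
    IsKillingAt (metric α γ δ) (fun u => ![0, 0, 0, 0, 1]) v := by
  have h0 : v 1 ≠ 0 := ne_of_gt hy
  refine ⟨?_, ?_, ?_, ?_, ?_, ?_⟩ <;>
  · intro lam chi
    fin_cases lam <;> fin_cases chi <;>
    · simp [metric, Fin.sum_univ_five,
        pdA α v h0, pdB γ δ v h0, pdC γ δ v h0, pdD δ v, pdE γ δ v h0, pdF δ v,
        pdX1 v, pdX2 v, pdX3 v, pdX4 v, pdX5 v, pdX6 v, pd_const, pd_coord,
        Matrix.vecHead, Matrix.vecTail, Function.comp]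
      try field_simp
      try ring

end Stmt14
end

section
/- Let α > 0, β > 0 be real, set γ = 1/√β − √β/α and ζ = √β/α − 1/(2√β). Then for all real a₂, b₂, c₂, d₂, e₂, the 5×5 real matrix A with rows (0, γc₂, −γb₂, 0, 0), (−ζc₂, 0, ζa₂, 0, 0), (−3b₂/√β, 3a₂/√β, 0, (1/√α + 1/√β)e₂, −(1/√α + 1/√β)d₂), (−e₂, −d₂, −e₂, b₂, a₂ + c₂), (−d₂/√α, e₂/√α, d₂/√β, a₂/√α − c₂/√β, −b₂/√α) has determinant zero. Consequently, for any X₂ in the reductive complement m = ⟨L¹,…,L⁵⟩ there is a nonzero X₁ ∈ m solving the natural-reductivity linear system for all X₃ ∈ m; this is the key step showing the extended Siegel–Jacobi upper half-plane X̃^J_1 is not naturally reductive with respect to its three-parameter invariant metric. -/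
open Matrix Real

namespace Stmt16

theorem natural_reductivity_matrix_det_zero (α β : ℝ) (hα : 0 < α) (hβ : 0 < β)
    (a₂ b₂ c₂ d₂ e₂ : ℝ) :
    let γ := 1 / Real.sqrt β - Real.sqrt β / α
    let ζ := Real.sqrt β / α - 1 / (2 * Real.sqrt β)
    let A : Matrix (Fin 5) (Fin 5) ℝ :=
      !![0, γ * c₂, -(γ * b₂), 0, 0;
         -(ζ * c₂), 0, ζ * a₂, 0, 0;
         -(3 * b₂ / Real.sqrt β), 3 * a₂ / Real.sqrt β, 0,
           (1 / Real.sqrt α + 1 / Real.sqrt β) * e₂,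
           -((1 / Real.sqrt α + 1 / Real.sqrt β) * d₂);
         -e₂, -d₂, -e₂, b₂, a₂ + c₂;
         -(d₂ / Real.sqrt α), e₂ / Real.sqrt α, d₂ / Real.sqrt β,
           a₂ / Real.sqrt α - c₂ / Real.sqrt β, -(b₂ / Real.sqrt α)]
    A.det = 0 ∧ ∃ x : Fin 5 → ℝ, x ≠ 0 ∧ A.mulVec x = 0 := by
  intro γ ζ A
  have hker : ∃ x : Fin 5 → ℝ, x ≠ 0 ∧ A.mulVec x = 0 := by
    by_cases h : a₂ = 0 ∧ b₂ = 0 ∧ c₂ = 0 ∧ d₂ = 0 ∧ e₂ = 0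
    · obtain ⟨ha, hb, hc, hd, he⟩ := h
      refine ⟨![1, 0, 0, 0, 0], ?_, ?_⟩
      · intro hx
        have := congrFun hx 0
        simp at this
      · subst ha hb hc hd he
        funext i
        fin_cases i <;>
          simp [A, Matrix.cons_mulVec, Matrix.cons_dotProduct, Matrix.dotProduct_of_isEmpty]
    · refine ⟨![a₂, b₂, c₂, d₂, e₂], ?_, ?_⟩
      · intro hx
        apply h
        refine ⟨?_, ?_, ?_, ?_, ?_⟩
        · simpa using congrFun hx 0
        · simpa using congrFun hx 1
        · simpa using congrFun hx 2
        · simpa using congrFun hx 3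
        · simpa using congrFun hx 4
      · funext i
        fin_cases i <;>
          simp [A, Matrix.mulVec, dotProduct, Fin.sum_univ_five] <;> ring
  obtain ⟨x, hx, hAx⟩ := hker
  refine ⟨?_, x, hx, hAx⟩
  rw [← Matrix.exists_mulVec_eq_zero_iff]
  exact ⟨x, hx, hAx⟩

end Stmt16
end

section
/- Let r > 0 be real. A vector (a, b, c, d, e) ∈ ℝ⁵ satisfies the system r·b·c + d·e = 0, −r·a·c + d² − e² = 0, b·d + e·(a + c) = 0, r·c·d + b·e − a·d = 0 if and only if it has one of the following forms: (i) a = b = d = e = 0 (c arbitrary); (ii) c = d = e = 0 (a, b arbitrary); (iii) there exist c ∈ ℝ and ε ∈ {−1, 1} with a = r·c, b = 0, d = ε·r·c, e = 0; (iv) there exist a ∈ ℝ and ε ∈ {−1, 1} with b = 0, c = −a, d = 0, e = ε·√r·a; (v) there exist e ∈ ℝ and ε₁, ε₂ ∈ {−1, 1} with a = ε₁ε₂(1 − r)e/√r, b = ε₁·e, c = −ε₁ε₂·e/√r, d = ε₂·√r·e. (These are the geodesic vectors X = aL¹ + bL² + cL³ + dL⁴ + eL⁵ + fL⁶, f arbitrary,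 of the Siegel–Jacobi upper half-plane X^J_1 with respect to the balanced metric, with r = √(α/β).) -/
open Real

namespace Stmt17

theorem geodesic_vectors_siegel_jacobi (r : ℝ) (hr : 0 < r) (a b c d e : ℝ) :
    (r * b * c + d * e = 0 ∧
     -(r * a * c) + d ^ 2 - e ^ 2 = 0 ∧
     b * d + e * (a + c) = 0 ∧
     r * c * d + b * e - a * d = 0) ↔
    -- (i) a = b = d = e = 0, c arbitrary
    ((a = 0 ∧ b = 0 ∧ d = 0 ∧ e = 0) ∨
    -- (ii) c = d = e = 0, a, b arbitrary
     (c = 0 ∧ d = 0 ∧ e = 0) ∨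
    -- (iii) a = r c, b = 0, d = ± r c, e = 0
     (∃ ε : ℝ, (ε = 1 ∨ ε = -1) ∧ a = r * c ∧ b = 0 ∧ d = ε * (r * c) ∧ e = 0) ∨
    -- (iv) b = 0, c = −a, d = 0, e = ± √r a
     (∃ ε : ℝ, (ε = 1 ∨ ε = -1) ∧ b = 0 ∧ c = -a ∧ d = 0 ∧ e = ε * (Real.sqrt r * a)) ∨
    -- (v) a = ε₁ε₂(1 − r)e/√r, b = ε₁ e, c = −ε₁ε₂ e/√r, d = ε₂ √r e
     (∃ ε₁ ε₂ : ℝ, (ε₁ = 1 ∨ ε₁ = -1) ∧ (ε₂ = 1 ∨ ε₂ = -1) ∧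
       a = ε₁ * ε₂ * ((1 - r) / Real.sqrt r) * e ∧ b = ε₁ * e ∧
       c = -(ε₁ * ε₂ * (e / Real.sqrt r)) ∧ d = ε₂ * (Real.sqrt r * e))) := by
  have hs0 : 0 < Real.sqrt r := Real.sqrt_pos.mpr hr
  have hs0' : Real.sqrt r ≠ 0 := ne_of_gt hs0
  have hs : Real.sqrt r ^ 2 = r := Real.sq_sqrt hr.le
  constructor
  · rintro ⟨h1, h2, h3, h4⟩
    by_cases he : e = 0
    · subst he
      by_cases hd : d = 0
      · subst hd
        by_cases hc : c = 0
        · exact Or.inr (Or.inl ⟨hc, rfl, rfl⟩)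
        · left
          have hb : b = 0 := by
            have : r * b * c = 0 := by linarith
            rcases mul_eq_zero.mp this with h | h
            · rcases mul_eq_zero.mp h with h' | h'
              · exact absurd h' (ne_of_gt hr)
              · exact h'
            · exact absurd h hc
          have ha : a = 0 := by
            have : r * a * c = 0 := by nlinarith
            rcases mul_eq_zero.mp this with h | h
            · rcases mul_eq_zero.mp h with h' | h'
              · exact absurd h' (ne_of_gt hr)
              · exact h'
            · exact absurd h hc
          exact ⟨ha, hb, rfl, rfl⟩
      · -- e = 0, d ≠ 0
        have hb : b = 0 := by
          have : b * d = 0 := by linarith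
          rcases mul_eq_zero.mp this with h | h
          · exact h
          · exact absurd h hd
        have ha : a = r * c := by
          have : (r * c - a) * d = 0 := by linarith [h4]
          rcases mul_eq_zero.mp this with h | h
          · linarith
          · exact absurd h hd
        have hd2 : (d - r * c) * (d + r * c) = 0 := by
          linear_combination h2 + (r * c) * ha
        rcases mul_eq_zero.mp hd2 with h | h
        · exact Or.inr (Or.inr (Or.inl ⟨1, Or.inl rfl, ha, hb, by linarith, rfl⟩))
        · exact Or.inr (Or.inr (Or.inl ⟨-1, Or.inr rfl, ha, hb, by linarith, rfl⟩))
    · by_cases hd : d = 0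
      · subst hd
        -- e ≠ 0, d = 0
        have hac : r * a * c = -e ^ 2 := by linarith
        have he2 : e ^ 2 ≠ 0 := pow_ne_zero 2 he
        have hc0 : c ≠ 0 := by
          intro h; apply he2; rw [h] at hac; nlinarith
        have hb : b = 0 := by
          have : r * b * c = 0 := by linarith
          rcases mul_eq_zero.mp this with h | h
          · rcases mul_eq_zero.mp h with h' | h'
            · exact absurd h' (ne_of_gt hr)
            · exact h'
          · exact absurd h hc0
        have hca : c = -a := by
          have : e * (a + c) = 0 := by linarith
          rcases mul_eq_zero.mp this with h | h
          · exact absurd h he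
          · linarith
        have hra : e ^ 2 = r * a ^ 2 := by rw [hca] at hac; nlinarith
        have hea : (e - Real.sqrt r * a) * (e + Real.sqrt r * a) = 0 := by
          linear_combination hra - a ^ 2 * hs
        rcases mul_eq_zero.mp hea with h | h
        · exact Or.inr (Or.inr (Or.inr (Or.inl ⟨1, Or.inl rfl, hb, hca, rfl, by linarith⟩)))
        · exact Or.inr (Or.inr (Or.inr (Or.inl ⟨-1, Or.inr rfl, hb, hca, rfl, by linarith⟩)))
      · -- e ≠ 0, d ≠ 0
        have key : e * (d ^ 2 - r * c * (a + c)) = 0 := by linear_combination d * h1 - r * c * h3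
        have hdc : d ^ 2 = r * c * (a + c) := by
          rcases mul_eq_zero.mp key with h | h
          · exact absurd h he
          · linarith
        have key2 : d ^ 2 * (r * c - a) - e ^ 2 * (a + c) = 0 := by
          linear_combination d * h4 - e * h3
        have he2c : e ^ 2 = r * c ^ 2 := by linear_combination -h2 + hdc
        have hc0 : c ≠ 0 := by
          intro h; apply he; rw [h] at he2c; nlinarith [pow_ne_zero 2 he, sq_nonneg e]
        have hu0 : a + c ≠ 0 := by
          intro h; apply hd; rw [h, mul_zero] at hdc; exact pow_eq_zero_iff (n := 2) (by norm_num) |>.mp hdc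
        have harc : a = (r - 1) * c := by
          have h5 : r * c * (a + c) * (r * c - a - c) = 0 := by
            linear_combination key2 - (r * c - a) * hdc + (a + c) * he2c
          rcases mul_eq_zero.mp h5 with h | h
          · rcases mul_eq_zero.mp h with h' | h'
            · rcases mul_eq_zero.mp h' with h'' | h''
              · exact absurd h'' (ne_of_gt hr)
              · exact absurd h'' hc0
            · exact absurd h' hu0
          · linarith
        have hd2 : (d - r * c) * (d + r * c) = 0 := by
          linear_combination hdc + (r * c) * harc
        have hsc : (Real.sqrt r * c - e) * (Real.sqrt r * c + e) = 0 := by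
          linear_combination -he2c + c ^ 2 * hs
        have hrc0 : r * c ≠ 0 := mul_ne_zero (ne_of_gt hr) hc0
        have hbd : b * d = -(e * r * c) := by
          have hac : a + c = r * c := by rw [harc]; ring
          rw [hac] at h3; linarith
        right; right; right; right
        rcases mul_eq_zero.mp hd2 with hτ | hτ
        · -- d = r c
          have hdv : d = r * c := by linarith
          have hbv : b = -e := by
            have h' : (b + e) * (r * c) = 0 := by
              rw [hdv] at hbd; linear_combination hbd
            rcases mul_eq_zero.mp h' with h | h
            · linarith
            · exact absurd h hrc0
          rcases mul_eq_zero.mp hsc with hσ | hσ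
          · -- e = √r c : ε₁ = -1, ε₂ = 1
            have he' : e = Real.sqrt r * c := by linarith
            refine ⟨-1, 1, Or.inr rfl, Or.inl rfl, ?_, by rw [hbv]; ring, ?_, ?_⟩
            · rw [harc, he']; field_simp; ring
            · rw [he']; field_simp
            · rw [hdv, he']; linear_combination (-c) * hs
          · -- e = -(√r c) : ε₁ = -1, ε₂ = -1
            have he' : e = -(Real.sqrt r * c) := by linarith
            refine ⟨-1, -1, Or.inr rfl, Or.inr rfl, ?_, by rw [hbv]; ring, ?_, ?_⟩
            · rw [harc, he']; field_simp; ring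
            · rw [he']; field_simp
            · rw [hdv, he']; linear_combination (-c) * hs
        · -- d = -(r c)
          have hdv : d = -(r * c) := by linarith
          have hbv : b = e := by
            have h' : (b - e) * (r * c) = 0 := by
              rw [hdv] at hbd; linear_combination -hbd
            rcases mul_eq_zero.mp h' with h | h
            · linarith
            · exact absurd h hrc0
          rcases mul_eq_zero.mp hsc with hσ | hσ
          · -- e = √r c : ε₁ = 1, ε₂ = -1
            have he' : e = Real.sqrt r * c := by linarith
            refine ⟨1, -1, Or.inl rfl, Or.inr rfl, ?_, by rw [hbv]; ring, ?_, ?_⟩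
            · rw [harc, he']; field_simp; ring
            · rw [he']; field_simp
            · rw [hdv, he']; linear_combination c * hs
          · -- e = -(√r c) : ε₁ = 1, ε₂ = 1
            have he' : e = -(Real.sqrt r * c) := by linarith
            refine ⟨1, 1, Or.inl rfl, Or.inl rfl, ?_, by rw [hbv]; ring, ?_, ?_⟩
            · rw [harc, he']; field_simp; ring
            · rw [he']; field_simp
            · rw [hdv, he']; linear_combination c * hs
  · rintro (⟨ha, hb, hd, he⟩ | ⟨hc, hd, he⟩ | ⟨ε, hε, ha, hb, hd, he⟩ |
      ⟨ε, hε, hb, hc, hd, he⟩ | ⟨ε₁, ε₂, hε₁, hε₂, ha, hb, hc, hd⟩)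
    · subst_vars; exact ⟨by ring, by ring, by ring, by ring⟩
    · subst_vars; exact ⟨by ring, by ring, by ring, by ring⟩
    · rcases hε with h | h <;> subst_vars <;>
        exact ⟨by ring, by ring, by ring, by ring⟩
    · rcases hε with h | h <;> subst_vars <;>
        exact ⟨by ring, by linear_combination (-(a ^ 2)) * hs, by ring, by ring⟩
    · have h1sq : ε₁ ^ 2 = 1 := by rcases hε₁ with h | h <;> rw [h] <;> norm_num
      have h2sq : ε₂ ^ 2 = 1 := by rcases hε₂ with h | h <;> rw [h] <;> norm_num
      subst_vars
      refine ⟨?_, ?_, ?_, ?_⟩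
      · field_simp
        linear_combination ε₂ * e ^ 2 * hs - r * ε₂ * e ^ 2 * h1sq
      · field_simp
        linear_combination (ε₂ ^ 2 * e ^ 2 * (Real.sqrt r ^ 2 + r) - e ^ 2) * hs +
          (r * (1 - r) * ε₂ ^ 2 * e ^ 2) * h1sq + (r * e ^ 2) * h2sq
      · field_simp
        linear_combination ε₁ * ε₂ * e ^ 2 * hs
      · field_simp
        linear_combination (-(ε₁ * e ^ 2)) * h2sq

end Stmt17
end

section
/- Let F₃(r) = r³ + r − 1 and F₂(r) = r² − r + 1, and let R₃ be the unique real root of F₃. Let r > R₃ be real (so r > 0 and F₃(r) > 0). A vector (a, b, c, d, e) ∈ ℝ⁵ satisfies the system (r + 1/r)·b·c + d·e = 0, −(r + 2/r)·a·c + d² − e² = 0, −r·a·b + (1 − r)·d·e = 0, b·d + e·(a + c) = 0, r·c·d + b·e − a·d = 0 if and only if it has one of the following forms: (i) there exist e ∈ ℝ and ε₁, ε₂ ∈ {−1, 1} with a = ε₁ε₂(1 − r)·√((1 + r²)/(r·F₂(r)))·e, b = ε₂·√(F₃(r)/(r(r² + 1)))·e, c = −ε₁ε₂·r·√(r/((r²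 + 1)·F₂(r)))·e, d = ε₁·√(F₃(r)/F₂(r))·e; (ii) there exist e ∈ ℝ and ε ∈ {−1, 1} with a = ε·√(r/(r² + 2))·e, b = 0, c = −a, d = 0; (iii) there exist c ∈ ℝ and ε ∈ {−1, 1} with a = r·c, b = 0, d = ε·√(2 + r²)·c, e = 0; (iv) a = b = d = e = 0 (c arbitrary); (v) a = c = d = e = 0 (b arbitrary); (vi) b = c = d = e = 0 (a arbitrary). (These are the geodesic vectors X = aL¹ + ⋯ + eL⁵ + fL⁶, f arbitrary, of the extended Siegel–Jacobi upper half-plane X̃^J_1 with respect to its three-parameter invariant metric.) -/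
open Real

namespace Stmt18

set_option maxHeartbeats 2000000 in
theorem geodesic_vectors_extended_siegel_jacobi
    (R₃ : ℝ) (hR₃ : R₃ ^ 3 + R₃ - 1 = 0)
    (hR₃uniq : ∀ s : ℝ, s ^ 3 + s - 1 = 0 → s = R₃)
    (r : ℝ) (hr : R₃ < r) (a b c d e : ℝ) :
    ((r + 1 / r) * b * c + d * e = 0 ∧
     -((r + 2 / r) * a * c) + d ^ 2 - e ^ 2 = 0 ∧
     -(r * a * b) + (1 - r) * d * e = 0 ∧
     b * d + e * (a + c) = 0 ∧
     r * c * d + b * e - a * d = 0) ↔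
    -- (i)
    ((∃ ε₁ ε₂ : ℝ, (ε₁ = 1 ∨ ε₁ = -1) ∧ (ε₂ = 1 ∨ ε₂ = -1) ∧
       a = ε₁ * ε₂ * (1 - r) * Real.sqrt ((1 + r ^ 2) / (r * (r ^ 2 - r + 1))) * e ∧
       b = ε₂ * Real.sqrt ((r ^ 3 + r - 1) / (r * (r ^ 2 + 1))) * e ∧
       c = -(ε₁ * ε₂ * r * Real.sqrt (r / ((r ^ 2 + 1) * (r ^ 2 - r + 1))) * e) ∧
       d = ε₁ * Real.sqrt ((r ^ 3 + r - 1) / (r ^ 2 - r + 1)) * e) ∨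
    -- (ii)
     (∃ ε : ℝ, (ε = 1 ∨ ε = -1) ∧
       a = ε * Real.sqrt (r / (r ^ 2 + 2)) * e ∧ b = 0 ∧
       c = -(ε * Real.sqrt (r / (r ^ 2 + 2)) * e) ∧ d = 0) ∨
    -- (iii)
     (∃ ε : ℝ, (ε = 1 ∨ ε = -1) ∧
       a = r * c ∧ b = 0 ∧ d = ε * Real.sqrt (2 + r ^ 2) * c ∧ e = 0) ∨
    -- (iv) a = b = d = e = 0, c arbitrary
     (a = 0 ∧ b = 0 ∧ d = 0 ∧ e = 0) ∨
    -- (v) a = c = d = e = 0, b arbitrary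
     (a = 0 ∧ c = 0 ∧ d = 0 ∧ e = 0) ∨
    -- (vi) b = c = d = e = 0, a arbitrary
     (b = 0 ∧ c = 0 ∧ d = 0 ∧ e = 0)) := by
  have sqcases : ∀ x y : ℝ, x ^ 2 = y ^ 2 → x = y ∨ x = -y := by
    intro x y h
    have h' : (x - y) * (x + y) = 0 := by linear_combination h
    rcases mul_eq_zero.mp h' with h'' | h''
    · left; linarith
    · right; linarith
  have h0 : 0 < R₃ := by nlinarith [sq_nonneg R₃, sq_nonneg (R₃ - 1), sq_nonneg (R₃ + 1)]
  have hr0 : 0 < r := lt_trans h0 hr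
  have hr0' : r ≠ 0 := ne_of_gt hr0
  have hF3 : 0 < r ^ 3 + r - 1 := by
    nlinarith [sq_nonneg (r + R₃), sq_nonneg (r - R₃),
      mul_pos (sub_pos.mpr hr) (mul_pos h0 hr0)]
  have hF2 : 0 < r ^ 2 - r + 1 := by nlinarith [sq_nonneg (2 * r - 1)]
  have hF2' : r ^ 2 - r + 1 ≠ 0 := ne_of_gt hF2
  set t := Real.sqrt ((r ^ 3 + r - 1) / (r ^ 2 - r + 1)) with hts
  set u := Real.sqrt (r / ((r ^ 2 + 1) * (r ^ 2 - r + 1))) with hus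
  set v := Real.sqrt (r / (r ^ 2 + 2)) with hvs
  set w := Real.sqrt (2 + r ^ 2) with hws
  have ht2 : t ^ 2 = (r ^ 3 + r - 1) / (r ^ 2 - r + 1) := Real.sq_sqrt (by positivity)
  have hu2 : u ^ 2 = r / ((r ^ 2 + 1) * (r ^ 2 - r + 1)) := Real.sq_sqrt (by positivity)
  have hv2 : v ^ 2 = r / (r ^ 2 + 2) := Real.sq_sqrt (by positivity)
  have hw2 : w ^ 2 = 2 + r ^ 2 := Real.sq_sqrt (by positivity)
  have ht2' : t ^ 2 * (r ^ 2 - r + 1) = r ^ 3 + r - 1 := by rw [ht2]; (have : r * (r - 1) + 1 ≠ 0 := fun h => hF2' (by linear_combination h)); field_simp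
  have hu2' : u ^ 2 * ((r ^ 2 + 1) * (r ^ 2 - r + 1)) = r := by rw [hu2]; (have : r * (r - 1) + 1 ≠ 0 := fun h => hF2' (by linear_combination h)); field_simp
  have hv2' : v ^ 2 * (r ^ 2 + 2) = r := by rw [hv2]; field_simp
  have hA : Real.sqrt ((1 + r ^ 2) / (r * (r ^ 2 - r + 1))) = (r ^ 2 + 1) / r * u := by
    rw [hus, show (1 + r ^ 2) / (r * (r ^ 2 - r + 1))
        = ((r ^ 2 + 1) / r) ^ 2 * (r / ((r ^ 2 + 1) * (r ^ 2 - r + 1))) by field_simp; ring]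
    rw [Real.sqrt_mul (sq_nonneg _), Real.sqrt_sq (by positivity)]
  have hB : Real.sqrt ((r ^ 3 + r - 1) / (r * (r ^ 2 + 1)))
      = (r ^ 2 - r + 1) / r * (t * u) := by
    rw [hts, hus, ← Real.sqrt_mul (by positivity),
      show (r ^ 3 + r - 1) / (r * (r ^ 2 + 1))
        = ((r ^ 2 - r + 1) / r) ^ 2 * ((r ^ 3 + r - 1) / (r ^ 2 - r + 1)
            * (r / ((r ^ 2 + 1) * (r ^ 2 - r + 1)))) by (have : r * (r - 1) + 1 ≠ 0 := fun h => hF2' (by linear_combination h)); field_simp]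
    rw [Real.sqrt_mul (sq_nonneg _), Real.sqrt_sq (by positivity)]
  rw [hA, hB]
  constructor
  · rintro ⟨h1, h2, h3, h4, h5⟩
    have h1' : (r ^ 2 + 1) * (b * c) + r * (d * e) = 0 := by
      linear_combination (norm := (field_simp; ring)) r * h1
    have h2' : -((r ^ 2 + 2) * (a * c)) + r * d ^ 2 - r * e ^ 2 = 0 := by
      linear_combination (norm := (field_simp; ring)) r * h2
    have h3' : -(r ^ 2 * (a * b)) + r * (1 - r) * (d * e) = 0 := by
      linear_combination (norm := (field_simp; ring)) r * h3
    by_cases hd0 : d = 0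
    · subst hd0
      by_cases hb0 : b = 0
      · subst hb0
        by_cases he0 : e = 0
        · subst he0
          have hac : a * c = 0 := by
            have h := mul_eq_zero.mp (show ((r : ℝ) ^ 2 + 2) * (a * c) = 0 by
              linear_combination -h2')
            exact h.resolve_left (by positivity)
          rcases mul_eq_zero.mp hac with ha | hc
          · exact Or.inr (Or.inr (Or.inr (Or.inl ⟨ha, rfl, rfl, rfl⟩)))
          · exact Or.inr (Or.inr (Or.inr (Or.inr (Or.inr ⟨rfl, hc, rfl, rfl⟩))))
        · have hac : a + c = 0 := by
            have h := mul_eq_zero.mp (show e * (a + c) = 0 by linear_combination h4)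
            exact h.resolve_left he0
          have ha2 : a ^ 2 = (v * e) ^ 2 := by
            apply mul_left_cancel₀ (show ((r : ℝ) ^ 2 + 2) ≠ 0 by positivity)
            linear_combination h2' + (r ^ 2 + 2) * a * hac - e ^ 2 * hv2'
          rcases sqcases a (v * e) ha2 with h | h
          · exact Or.inr (Or.inl ⟨1, Or.inl rfl, by linear_combination h, rfl,
              by linear_combination hac - h, rfl⟩)
          · exact Or.inr (Or.inl ⟨-1, Or.inr rfl, by linear_combination h, rfl,
              by linear_combination hac - h, rfl⟩)
      · have he : e = 0 := by
          have h := mul_eq_zero.mp (show b * e = 0 by linear_combination h5)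
          exact h.resolve_left hb0
        have haz : a = 0 := by
          have h' : a * b = 0 := by
            have h := mul_eq_zero.mp (show (r : ℝ) ^ 2 * (a * b) = 0 by
              linear_combination -h3')
            exact h.resolve_left (by positivity)
          exact (mul_eq_zero.mp h').resolve_right hb0
        have hcz : c = 0 := by
          have h' : b * c = 0 := by
            have h := mul_eq_zero.mp (show ((r : ℝ) ^ 2 + 1) * (b * c) = 0 by
              linear_combination h1')
            exact h.resolve_left (by positivity)
          exact (mul_eq_zero.mp h').resolve_left hb0
        exact Or.inr (Or.inr (Or.inr (Or.inr (Or.inl ⟨haz, hcz, rfl, he⟩))))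
    · by_cases he0 : e = 0
      · subst he0
        have hb : b = 0 := by
          have h := mul_eq_zero.mp (show b * d = 0 by linear_combination h4)
          exact h.resolve_right hd0
        have haeq : a = r * c := by
          have h := mul_eq_zero.mp (show d * (r * c - a) = 0 by linear_combination h5)
          have h' := h.resolve_left hd0
          linarith
        have hd2 : d ^ 2 = (w * c) ^ 2 := by
          apply mul_left_cancel₀ hr0'
          linear_combination h2' + (r ^ 2 + 2) * c * haeq - r * c ^ 2 * hw2
        rcases sqcases d (w * c) hd2 with h | h
        · exact Or.inr (Or.inr (Or.inl ⟨1, Or.inl rfl, haeq, hb, by linear_combination h, rfl⟩))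
        · exact Or.inr (Or.inr (Or.inl ⟨-1, Or.inr rfl, haeq, hb, by linear_combination h, rfl⟩))
      · left
        have h5' : b * e = d * (a - r * c) := by linear_combination h5
        have hC : (r ^ 2 + 1) * c * (a - r * c) + r * e ^ 2 = 0 := by
          have h := mul_eq_zero.mp (show d * ((r ^ 2 + 1) * c * (a - r * c) + r * e ^ 2) = 0 by
            linear_combination e * h1' - (r ^ 2 + 1) * c * h5')
          exact h.resolve_left hd0
        have hBq : r * a * (a - r * c) - (1 - r) * e ^ 2 = 0 := by
          have hBdr : d * (r * (r * a * (a - r * c) - (1 - r) * e ^ 2)) = 0 := by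
            linear_combination (-(r ^ 2 * a)) * h5' - e * h3'
          have h := (mul_eq_zero.mp hBdr).resolve_left hd0
          have h' := (mul_eq_zero.mp h).resolve_left hr0'
          linarith
        have hane : a - r * c ≠ 0 := by
          intro h
          apply he0
          have h1 : r * e ^ 2 = 0 := by linear_combination hC - (r ^ 2 + 1) * c * h
          have h2 := (mul_eq_zero.mp h1).resolve_left hr0'
          exact sq_eq_zero_iff.mp h2
        have hE' : r ^ 2 * a - (r - 1) * (r ^ 2 + 1) * c = 0 := by
          have hfac : (a - r * c) * (r ^ 2 * a + (1 - r) * (r ^ 2 + 1) * c) = 0 := by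
            linear_combination r * hBq + (1 - r) * hC
          have h := (mul_eq_zero.mp hfac).resolve_left hane
          linear_combination h
        have hc2 : c ^ 2 * ((r ^ 2 + 1) * (r ^ 2 - r + 1)) - r ^ 3 * e ^ 2 = 0 := by
          linear_combination (-(r ^ 2)) * hC + (r ^ 2 + 1) * c * hE'
        have hceq : c = r * u * e ∨ c = -(r * u * e) := by
          apply sqcases
          apply mul_left_cancel₀ (show ((r : ℝ) ^ 2 + 1) * (r ^ 2 - r + 1) ≠ 0 by positivity)
          linear_combination hc2 - r ^ 2 * e ^ 2 * hu2'
        have hd2 : d ^ 2 * (r ^ 2 - r + 1) - (r ^ 3 + r - 1) * e ^ 2 = 0 := by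
          have h : (d ^ 2 * (r ^ 2 - r + 1) - (r ^ 3 + r - 1) * e ^ 2) * r ^ 3 = 0 := by
            linear_combination (r ^ 2 * (r ^ 2 - r + 1)) * h2'
              + ((r ^ 2 + 2) * (r ^ 2 - r + 1) * c) * hE' + ((r ^ 2 + 2) * (r - 1)) * hc2
          exact (mul_eq_zero.mp h).resolve_right (pow_ne_zero 3 hr0')
        have hdeq : d = t * e ∨ d = -(t * e) := by
          apply sqcases
          apply mul_left_cancel₀ hF2'
          linear_combination hd2 - e ^ 2 * ht2'
        rcases hdeq with hdc | hdc <;> rcases hceq with hcc | hcc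
        · have HA : a = 1 * (-1) * (1 - r) * ((r ^ 2 + 1) / r * u) * e := by
            linear_combination (norm := (field_simp; ring))
              (1 / r ^ 2) * hE' + ((r - 1) * (r ^ 2 + 1) / r ^ 2) * hcc
          refine ⟨1, -1, Or.inl rfl, Or.inr rfl, HA, ?_, by linear_combination hcc,
            by linear_combination hdc⟩
          apply mul_right_cancel₀ he0
          linear_combination (norm := (field_simp; ring)) h5' + (a - r * c) * hdc
            + (1 * t * e) * HA + (-(1 * t * e * r)) * hcc
        · have HA : a = 1 * 1 * (1 - r) * ((r ^ 2 + 1) / r * u) * e := by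
            linear_combination (norm := (field_simp; ring))
              (1 / r ^ 2) * hE' + ((r - 1) * (r ^ 2 + 1) / r ^ 2) * hcc
          refine ⟨1, 1, Or.inl rfl, Or.inl rfl, HA, ?_, by linear_combination hcc,
            by linear_combination hdc⟩
          apply mul_right_cancel₀ he0
          linear_combination (norm := (field_simp; ring)) h5' + (a - r * c) * hdc
            + (1 * t * e) * HA + (-(1 * t * e * r)) * hcc
        · have HA : a = (-1) * 1 * (1 - r) * ((r ^ 2 + 1) / r * u) * e := by
            linear_combination (norm := (field_simp; ring))
              (1 / r ^ 2) * hE' + ((r - 1) * (r ^ 2 + 1) / r ^ 2) * hcc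
          refine ⟨-1, 1, Or.inr rfl, Or.inl rfl, HA, ?_, by linear_combination hcc,
            by linear_combination hdc⟩
          apply mul_right_cancel₀ he0
          linear_combination (norm := (field_simp; ring)) h5' + (a - r * c) * hdc
            + ((-1) * t * e) * HA + (-((-1) * t * e * r)) * hcc
        · have HA : a = (-1) * (-1) * (1 - r) * ((r ^ 2 + 1) / r * u) * e := by
            linear_combination (norm := (field_simp; ring))
              (1 / r ^ 2) * hE' + ((r - 1) * (r ^ 2 + 1) / r ^ 2) * hcc
          refine ⟨-1, -1, Or.inr rfl, Or.inr rfl, HA, ?_, by linear_combination hcc,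
            by linear_combination hdc⟩
          apply mul_right_cancel₀ he0
          linear_combination (norm := (field_simp; ring)) h5' + (a - r * c) * hdc
            + ((-1) * t * e) * HA + (-((-1) * t * e * r)) * hcc
  · rintro (⟨ε₁, ε₂, hE1o, hE2o, ha, hb, hc, hd⟩ | ⟨ε, hEo, ha, hb, hc, hd⟩ |
      ⟨ε, hEo, ha, hb, hd, he⟩ | ⟨ha, hb, hd, he⟩ | ⟨ha, hc, hd, he⟩ | ⟨hb, hc, hd, he⟩)
    · have hE1 : ε₁ ^ 2 = 1 := by rcases hE1o with rfl | rfl <;> norm_num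
      have hE2 : ε₂ ^ 2 = 1 := by rcases hE2o with rfl | rfl <;> norm_num
      subst ha hb hc hd
      refine ⟨?_, ?_, ?_, ?_, ?_⟩
      · linear_combination (norm := (field_simp; ring)) (-(ε₁ * t * e ^ 2 / r)) * hu2'
          + (-(ε₁ * (r ^ 2 + 1) * (r ^ 2 - r + 1) * t * u ^ 2 * e ^ 2 / r)) * hE2
      · linear_combination (norm := ((have : r * (r - 1) + 1 ≠ 0 := fun h => hF2' (by linear_combination h)); field_simp; ring))
          ((ε₂ ^ 2 * (r ^ 2 + 2) * (1 - r) * (r ^ 2 + 1) * u ^ 2 * e ^ 2 + r * t ^ 2 * e ^ 2) / r) * hE1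
          + ((r ^ 2 + 2) * (1 - r) * (r ^ 2 + 1) * u ^ 2 * e ^ 2 / r) * hE2
          + ((r ^ 2 + 2) * (1 - r) * e ^ 2 / (r * (r ^ 2 - r + 1))) * hu2'
          + (e ^ 2 / (r ^ 2 - r + 1)) * ht2'
      · linear_combination (norm := (field_simp; ring))
          (-(ε₁ * (1 - r) * (r ^ 2 + 1) * (r ^ 2 - r + 1) * t * u ^ 2 * e ^ 2 / r)) * hE2
          + (-(ε₁ * (1 - r) * t * e ^ 2 / r)) * hu2'
      · linear_combination (norm := (field_simp; ring)) (ε₁ * ε₂ * u * e ^ 2 / r) * ht2'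
      · linear_combination (norm := (field_simp; ring))
          (ε₂ * t * u * e ^ 2 * (-(r ^ 2) - (1 - r) * (r ^ 2 + 1) / r)) * hE1
    · have hE : ε ^ 2 = 1 := by rcases hEo with rfl | rfl <;> norm_num
      subst ha hb hc hd
      refine ⟨by ring, ?_, by ring, by ring, by ring⟩
      linear_combination (norm := (field_simp; ring))
        ((r + 2 / r) * v ^ 2 * e ^ 2) * hE + (e ^ 2 / r) * hv2'
    · have hE : ε ^ 2 = 1 := by rcases hEo with rfl | rfl <;> norm_num
      subst ha hb hd he
      refine ⟨by ring, ?_, by ring, by ring, by ring⟩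
      linear_combination (norm := (field_simp; ring)) (w ^ 2 * c ^ 2) * hE + c ^ 2 * hw2
    · subst ha hb hd he
      refine ⟨by ring, by ring, by ring, by ring, by ring⟩
    · subst ha hc hd he
      refine ⟨by ring, by ring, by ring, by ring, by ring⟩
    · subst hb hc hd he
      refine ⟨by ring, by ring, by ring, by ring, by ring⟩

end Stmt18
end
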